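/- Let S be a finite set of points in the Euclidean plane and G the weighted unit-disk graph on S. Let ⟨z₀, …, z_t⟩ with t ≥ 2 be an edge-minimal shortest path from s = z₀ to a = z_t in G. Then d_G(s, z_t) > d_G(s, z_{t−2}) + 1. -/

import Mathlib

noncomputable section

abbrev Pt := EuclideanSpace ℝ (Fin 2)

/-- The weighted unit-disk graph on a finite point set `S`: vertices are the points of
`S`, two distinct points are adjacent iff their Euclidean distance is at most 1. -/
def UDG (S : Finset Pt) : SimpleGraph {x : Pt // x ∈ S} where
  Adj a b := a ≠ b ∧ dist (a : Pt) (b : Pt) ≤ 1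
  symm := by
    constructor
    intro a b hab
    exact ⟨hab.1.symm, by rw [dist_comm]; exact hab.2⟩
  loopless := by
    constructor
    intro a ha
    exact ha.1 rfl

/-- The (weighted) length of a walk: the sum of the Euclidean lengths of its edges. -/
def wlen {S : Finset Pt} {u v : {x : Pt // x ∈ S}} (p : (UDG S).Walk u v) : ℝ :=
  (p.darts.map (fun d => dist (d.toProd.1 : Pt) (d.toProd.2 : Pt))).sum

/-- The shortest-path distance in the weighted unit-disk graph. -/
def dG (S : Finset Pt) (u v : {x : Pt // x ∈ S}) : ℝ :=
  sInf {L : ℝ | ∃ p : (UDG S).Walk u v, wlen p = L}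

lemma wlen_nonneg {S : Finset Pt} {u v : {x : Pt // x ∈ S}} (p : (UDG S).Walk u v) :
    0 ≤ wlen p := by
  apply List.sum_nonneg
  intro x hx
  simp only [List.mem_map] at hx
  obtain ⟨d, _, rfl⟩ := hx
  exact dist_nonneg

lemma wlen_cons {S : Finset Pt} {u v w : {x : Pt // x ∈ S}} (h : (UDG S).Adj u v)
    (p : (UDG S).Walk v w) :
    wlen (SimpleGraph.Walk.cons h p) = dist (u : Pt) (v : Pt) + wlen p := by
  simp [wlen]

lemma wlen_append {S : Finset Pt} {u v w : {x : Pt // x ∈ S}}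
    (p : (UDG S).Walk u v) (q : (UDG S).Walk v w) :
    wlen (p.append q) = wlen p + wlen q := by
  simp [wlen, SimpleGraph.Walk.darts_append]

lemma wlen_reverse {S : Finset Pt} {u v : {x : Pt // x ∈ S}} (p : (UDG S).Walk u v) :
    wlen p.reverse = wlen p := by
  have h : ((fun d : (UDG S).Dart => dist (d.toProd.1 : Pt) (d.toProd.2 : Pt)) ∘ SimpleGraph.Dart.symm)
      = fun d : (UDG S).Dart => dist (d.toProd.1 : Pt) (d.toProd.2 : Pt) := by
    funext d
    simp [SimpleGraph.Dart.symm, dist_comm]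
  simp [wlen, SimpleGraph.Walk.darts_reverse, List.map_reverse, List.sum_reverse,
    List.map_map, h]

lemma dG_le {S : Finset Pt} {u v : {x : Pt // x ∈ S}} (q : (UDG S).Walk u v) :
    dG S u v ≤ wlen q :=
  csInf_le ⟨0, by rintro L ⟨p, rfl⟩; exact wlen_nonneg p⟩ ⟨q, rfl⟩

/-- Key observation in Lemma 3 (lem-correct): along an edge-minimal shortest path with
at least two edges from `s` to `a`, the vertex `r' = z_{t-2}` two steps before `a`
satisfies `d_G(s,a) > d_G(s,r') + 1`. -/
theorem stmt_9 (S : Finset Pt) (s a : {x : Pt // x ∈ S})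
    (p : (UDG S).Walk s a) (hsp : wlen p = dG S s a)
    (hmin : ∀ q : (UDG S).Walk s a, wlen q = dG S s a → p.length ≤ q.length)
    (ht : 2 ≤ p.length) :
    dG S s (p.getVert (p.length - 2)) + 1 < dG S s a := by
  -- decompose p.reverse
  have decomp : ∀ (u v : {z : Pt // z ∈ S}) (w : (UDG S).Walk u v), 2 ≤ w.length →
      ∃ (x y : {z : Pt // z ∈ S}) (h1 : (UDG S).Adj u x) (h2 : (UDG S).Adj x y)
        (q : (UDG S).Walk y v),
        w = SimpleGraph.Walk.cons h1 (SimpleGraph.Walk.cons h2 q) := by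
    intro u v w hw
    cases w with
    | nil => simp at hw
    | cons h1 w1 =>
      cases w1 with
      | nil => simp at hw
      | cons h2 q => exact ⟨_, _, h1, h2, q, rfl⟩
  obtain ⟨x, y, h1, h2, q, hW⟩ := decomp a s p.reverse
    (by rwa [SimpleGraph.Walk.length_reverse])
  have hp : p = (SimpleGraph.Walk.cons h1 (SimpleGraph.Walk.cons h2 q)).reverse := by
    rw [← hW, p.reverse_reverse]
  have hv : p.getVert (p.length - 2) = y := by
    rw [hp, SimpleGraph.Walk.getVert_reverse, SimpleGraph.Walk.length_reverse]
    have hl : (SimpleGraph.Walk.cons h1 (SimpleGraph.Walk.cons h2 q)).length = q.length + 2 := by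
      simp
    have : (SimpleGraph.Walk.cons h1 (SimpleGraph.Walk.cons h2 q)).length -
        ((SimpleGraph.Walk.cons h1 (SimpleGraph.Walk.cons h2 q)).length - 2) = 2 := by omega
    rw [this]
    simp [SimpleGraph.Walk.getVert]
  subst hp
  set w := SimpleGraph.Walk.cons h1 (SimpleGraph.Walk.cons h2 q) with hw
  have hws : wlen w.reverse = wlen w := wlen_reverse w
  have hwlen : wlen w = dist (a : Pt) (x : Pt) + (dist (x : Pt) (y : Pt) + wlen q) := by
    rw [hw, wlen_cons, wlen_cons]
  have hqrev : wlen q.reverse = wlen q := wlen_reverse q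
  have hdy : dG S s y ≤ wlen q := hqrev ▸ dG_le q.reverse
  have hax : (0:ℝ) < dist (a : Pt) (x : Pt) :=
    dist_pos.2 (fun he => h1.1 (Subtype.coe_injective he))
  rw [hv]
  by_cases hya : dist (y : Pt) (a : Pt) ≤ 1
  · exfalso
    by_cases hyea : y = a
    · subst hyea
      have h3 : dG S s y ≤ wlen q := hdy
      have h4 : wlen q < dG S s y := by
        have : wlen w.reverse = dG S s y := hsp
        rw [hws, hwlen] at this
        nlinarith [(dist_nonneg : (0:ℝ) ≤ dist (x : Pt) (y : Pt))]
      linarith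
    · have h3 : (UDG S).Adj y a := ⟨hyea, hya⟩
      set r : (UDG S).Walk s a :=
        q.reverse.append (SimpleGraph.Walk.cons h3 SimpleGraph.Walk.nil) with hr
      have hrlen : wlen r = wlen q + dist (y : Pt) (a : Pt) := by
        rw [hr, wlen_append, hqrev, wlen_cons]
        simp [wlen]
      have htri : dist (y : Pt) (a : Pt) ≤ dist (x : Pt) (y : Pt) + dist (a : Pt) (x : Pt) := by
        have := dist_triangle (y : Pt) (x : Pt) (a : Pt)
        rw [dist_comm (y : Pt) (x : Pt), dist_comm (x : Pt) (a : Pt)] at this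
        linarith
      have hle : wlen r ≤ dG S s a := by
        rw [← hsp, hws, hwlen, hrlen]; linarith
      have heq : wlen r = dG S s a := le_antisymm hle (dG_le r)
      have := hmin r heq
      have hwl : w.reverse.length = q.length + 2 := by
        rw [SimpleGraph.Walk.length_reverse, hw]; simp
      have hrl : r.length = q.length + 1 := by
        rw [hr, SimpleGraph.Walk.length_append, SimpleGraph.Walk.length_reverse]; simp
      omega
  · push_neg at hya
    have htri : dist (y : Pt) (a : Pt) ≤ dist (x : Pt) (y : Pt) + dist (a : Pt) (x : Pt) := by
      have := dist_triangle (y : Pt) (x : Pt) (a : Pt)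
      rw [dist_comm (y : Pt) (x : Pt), dist_comm (x : Pt) (a : Pt)] at this
      linarith
    have : wlen w.reverse = dG S s a := hsp
    rw [hws, hwlen] at this
    linarith
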